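/- Let c3 > 0, c4 be real numbers and N ≥ 1 a natural number; let g, h : ℝ → ℝ with h twice differentiable, and let t be such that u := c3·t + c4 satisfies u ≥ 1 (and u > 1 where logarithms appear) and 0 < g(t) ≤ 1/(2·N) and h(t) ≥ 0. Define d2(s) := (h(s)/2)·log(c3·s + c4). Then |d2''(t)| · u^{2·N·g(t)} ≤ (1/2)·(c3²·h(t)/u + |h''(t)|·u·log(u) + 2·c3·|h'(t)|). -/
import Mathlib

open Real

theorem stmt_19 (c3 c4 : ℝ) (hc3 : 0 < c3) (N : ℕ) (hN : 1 ≤ N)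
    (g h : ℝ → ℝ) (hhdiff : Differentiable ℝ h) (hhdiff2 : Differentiable ℝ (deriv h))
    (t : ℝ) (hu : 1 < c3 * t + c4)
    (hg0 : 0 < g t) (hg1 : g t ≤ 1 / (2 * N)) (hh0 : 0 ≤ h t) :
    |deriv (deriv (fun s => (h s / 2) * Real.log (c3 * s + c4))) t| *
        (c3 * t + c4) ^ (2 * (N : ℝ) * g t) ≤
      (1 / 2) * (c3 ^ 2 * h t / (c3 * t + c4)
        + |deriv (deriv h) t| * (c3 * t + c4) * Real.log (c3 * t + c4)
        + 2 * c3 * |deriv h t|) := by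
  set u := c3 * t + c4 with hudef
  have hu0 : (0:ℝ) < u := lt_trans one_pos hu
  -- linear map derivative
  have hlin : ∀ s : ℝ, HasDerivAt (fun s => c3 * s + c4) c3 s := by
    intro s
    simpa using ((hasDerivAt_id s).const_mul c3).add_const c4
  -- first derivative on a neighborhood
  have hopen : {s : ℝ | 0 < c3 * s + c4} ∈ nhds t := by
    have : IsOpen {s : ℝ | 0 < c3 * s + c4} :=
      isOpen_lt continuous_const (by continuity)
    exact this.mem_nhds hu0
  have hd1 : ∀ s : ℝ, 0 < c3 * s + c4 →
      HasDerivAt (fun s => (h s / 2) * Real.log (c3 * s + c4))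
        (deriv h s / 2 * Real.log (c3 * s + c4) + h s / 2 * (c3 / (c3 * s + c4))) s := by
    intro s hs
    exact ((hhdiff s).hasDerivAt.div_const 2).mul ((hlin s).log hs.ne')
  have heq : deriv (fun s => (h s / 2) * Real.log (c3 * s + c4)) =ᶠ[nhds t]
      fun s => deriv h s / 2 * Real.log (c3 * s + c4) + h s / 2 * (c3 / (c3 * s + c4)) := by
    filter_upwards [hopen] with s hs
    exact (hd1 s hs).deriv
  have hderiv2 : deriv (deriv (fun s => (h s / 2) * Real.log (c3 * s + c4))) t =
      (deriv (deriv h) t / 2 * Real.log u + deriv h t / 2 * (c3 / u)) +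
      (deriv h t / 2 * (c3 / u) + h t / 2 * (c3 * -(c3 / u ^ 2))) := by
    rw [heq.deriv_eq]
    have h1 : HasDerivAt (fun s => deriv h s / 2 * Real.log (c3 * s + c4))
        (deriv (deriv h) t / 2 * Real.log u + deriv h t / 2 * (c3 / u)) t :=
      ((hhdiff2 t).hasDerivAt.div_const 2).mul ((hlin t).log hu0.ne')
    have hinv : HasDerivAt (fun s => c3 / (c3 * s + c4)) (c3 * -(c3 / u ^ 2)) t := by
      simpa [div_eq_mul_inv] using ((hlin t).inv hu0.ne').const_mul c3
    have h2 : HasDerivAt (fun s => h s / 2 * (c3 / (c3 * s + c4)))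
        (deriv h t / 2 * (c3 / u) + h t / 2 * (c3 * -(c3 / u ^ 2))) t :=
      ((hhdiff t).hasDerivAt.div_const 2).mul hinv
    exact (h1.add h2).deriv
  rw [hderiv2]
  set D2 := deriv (deriv h) t
  set D1 := deriv h t
  set L := Real.log u with hLdef
  have hL0 : 0 ≤ L := Real.log_nonneg hu.le
  -- exponent bound
  have hpow : u ^ (2 * (N : ℝ) * g t) ≤ u := by
    have hN0 : (0:ℝ) < N := by exact_mod_cast Nat.pos_of_ne_zero (by omega)
    have hexp : 2 * (N : ℝ) * g t ≤ 1 := by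
      have : 2 * (N : ℝ) * g t ≤ 2 * N * (1 / (2 * N)) := by
        apply mul_le_mul_of_nonneg_left hg1 (by positivity)
      calc 2 * (N : ℝ) * g t ≤ 2 * N * (1 / (2 * N)) := this
        _ = 1 := by field_simp
    calc u ^ (2 * (N : ℝ) * g t) ≤ u ^ (1:ℝ) :=
          Real.rpow_le_rpow_of_exponent_le hu.le hexp
      _ = u := Real.rpow_one u
  have hE : |(D2 / 2 * L + D1 / 2 * (c3 / u)) + (D1 / 2 * (c3 / u) + h t / 2 * (c3 * -(c3 / u ^ 2)))|
      ≤ |D2| / 2 * L + |D1| * (c3 / u) + h t / 2 * (c3 ^ 2 / u ^ 2) := by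
    have e1 : |D2 / 2 * L| = |D2| / 2 * L := by
      rw [abs_mul, abs_div, abs_of_nonneg hL0]; simp
    have e2 : |D1 / 2 * (c3 / u)| = |D1| / 2 * (c3 / u) := by
      rw [abs_mul, abs_div, abs_of_nonneg (by positivity : (0:ℝ) ≤ c3 / u)]; simp
    have e3 : |h t / 2 * (c3 * -(c3 / u ^ 2))| = h t / 2 * (c3 ^ 2 / u ^ 2) := by
      rw [abs_mul, abs_of_nonneg (by positivity : (0:ℝ) ≤ h t / 2),
        show c3 * -(c3 / u ^ 2) = -(c3 * (c3 / u ^ 2)) from by ring, abs_neg,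
        abs_of_nonneg (by positivity : (0:ℝ) ≤ c3 * (c3 / u ^ 2))]
      ring
    calc |(D2 / 2 * L + D1 / 2 * (c3 / u)) + (D1 / 2 * (c3 / u) + h t / 2 * (c3 * -(c3 / u ^ 2)))|
        ≤ (|D2 / 2 * L| + |D1 / 2 * (c3 / u)|) + (|D1 / 2 * (c3 / u)| + |h t / 2 * (c3 * -(c3 / u ^ 2))|) :=
          (abs_add_le _ _).trans (add_le_add (abs_add_le _ _) (abs_add_le _ _))
      _ = |D2| / 2 * L + |D1| * (c3 / u) + h t / 2 * (c3 ^ 2 / u ^ 2) := by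
          rw [e1, e2, e3]; ring
  have hmul : |(D2 / 2 * L + D1 / 2 * (c3 / u)) + (D1 / 2 * (c3 / u) + h t / 2 * (c3 * -(c3 / u ^ 2)))| *
      u ^ (2 * (N : ℝ) * g t) ≤
      (|D2| / 2 * L + |D1| * (c3 / u) + h t / 2 * (c3 ^ 2 / u ^ 2)) * u := by
    apply mul_le_mul hE hpow (by positivity) (by positivity)
  refine hmul.trans (le_of_eq ?_)
  field_simp
  ring
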